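/- Let T_n(x) = Σ_{0<|k|≤n} c_k e^{ikx} be a trigonometric polynomial of degree at most n with zero constant term, and α ∈ ℕ. Then the Bernstein inequality ‖T_n^{(α)}‖_p ≤ n^α ‖T_n‖_p holds for 1 ≤ p ≤ ∞, where T_n^{(α)} denotes the α-th derivative. -/

import Mathlib

open MeasureTheory Real Complex Finset
open scoped BigOperators Classical

noncomputable section

namespace BernsteinProof

/-- angles θ_j = (2j+1)π/(4n) -/
def th (n j : ℕ) : ℝ := (2 * (j:ℝ) + 1) * π / (4 * n)

/-- coefficients of the Riesz interpolation formula -/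
def lam (n j : ℕ) : ℝ := (-1) ^ j / (4 * n * Real.sin (th n j) ^ 2)

variable {n : ℕ}

lemma th_pos (hn : 0 < n) (j : ℕ) : 0 < th n j := by
  have h : (0:ℝ) < n := by exact_mod_cast hn
  have := Real.pi_pos
  unfold th; positivity

lemma th_lt_pi (hn : 0 < n) {j : ℕ} (hj : j < 2 * n) : th n j < π := by
  have hπ := Real.pi_pos
  have hn' : (0:ℝ) < n := by exact_mod_cast hn
  have hj' : (j:ℝ) + 1 ≤ 2 * n := by exact_mod_cast hj
  unfold th
  rw [div_lt_iff₀ (by positivity)]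
  nlinarith

lemma sin_th_pos (hn : 0 < n) {j : ℕ} (hj : j < 2 * n) : 0 < Real.sin (th n j) :=
  Real.sin_pos_of_pos_of_lt_pi (th_pos hn j) (th_lt_pi hn hj)

lemma th_reflect (hn : 0 < n) {j : ℕ} (hj : j < 2 * n) :
    th n (2 * n - 1 - j) = π - th n j := by
  have hn' : (0:ℝ) < n := by exact_mod_cast hn
  have hc : ((2 * n - 1 - j : ℕ) : ℝ) = 2 * n - 1 - j := by
    have h1 : (2 * n - 1 - j : ℕ) + j + 1 = 2 * n := by omega
    have h2 : ((2 * n - 1 - j : ℕ) : ℝ) + j + 1 = 2 * n := by exact_mod_cast congrArg (Nat.cast : ℕ → ℝ) h1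
    linarith
  unfold th
  rw [hc]
  field_simp
  ring

lemma sign_reflect {j : ℕ} (hj : j < 2 * n) :
    ((-1 : ℝ)) ^ (2 * n - 1 - j) = -((-1 : ℝ)) ^ j := by
  have h1 : ((-1 : ℝ)) ^ ((2 * n - 1 - j) + j) = -1 := by
    rw [show (2 * n - 1 - j) + j = 2 * (n - 1) + 1 by omega]
    rw [pow_succ, pow_mul]
    norm_num
  have h2 : ((-1 : ℝ)) ^ j * ((-1 : ℝ)) ^ j = 1 := by
    rw [← pow_add]
    exact Even.neg_one_pow ⟨j, rfl⟩
  rw [pow_add] at h1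
  calc ((-1 : ℝ)) ^ (2 * n - 1 - j)
      = ((-1 : ℝ)) ^ (2 * n - 1 - j) * (((-1 : ℝ)) ^ j * ((-1 : ℝ)) ^ j) := by rw [h2, mul_one]
    _ = (((-1 : ℝ)) ^ (2 * n - 1 - j) * ((-1 : ℝ)) ^ j) * ((-1 : ℝ)) ^ j := by ring
    _ = -((-1 : ℝ)) ^ j := by rw [h1]; ring

/-- A_m = Σ_j (-1)^j cos((2m+1)θ_j)/sin θ_j -/
def Asum (n m : ℕ) : ℝ :=
  ∑ j ∈ Finset.range (2 * n), (-1 : ℝ) ^ j * Real.cos ((2 * m + 1) * th n j) / Real.sin (th n j)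

/-- B_k = Σ_j (-1)^j sin(2kθ_j)/sin² θ_j -/
def Bsum (n k : ℕ) : ℝ :=
  ∑ j ∈ Finset.range (2 * n), (-1 : ℝ) ^ j * Real.sin (2 * k * th n j) / Real.sin (th n j) ^ 2

/-- G_m = Σ_j (-1)^j sin(2mθ_j) -/
def Gsum (n m : ℕ) : ℝ :=
  ∑ j ∈ Finset.range (2 * n), (-1 : ℝ) ^ j * Real.sin (2 * m * th n j)

lemma sin_odd (j : ℕ) : Real.sin ((2 * (j:ℝ) + 1) * π / 2) = (-1 : ℝ) ^ j := by
  induction j with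
  | zero => norm_num
  | succ i ih =>
    push_cast
    rw [show (2 * ((i:ℝ) + 1) + 1) * π / 2 = (2 * (i:ℝ) + 1) * π / 2 + π by ring,
      Real.sin_add_pi, ih, pow_succ]
    ring

lemma cos_odd_add (j : ℕ) (x : ℝ) :
    Real.cos ((2 * (j:ℝ) + 1) * π / 2 + x) = -((-1 : ℝ) ^ j * Real.sin x) := by
  induction j with
  | zero =>
    rw [show (2 * ((0:ℕ):ℝ) + 1) * π / 2 + x = x + π / 2 by push_cast; ring,
      Real.cos_add_pi_div_two]
    simp
  | succ i ih =>
    push_cast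
    rw [show (2 * ((i:ℝ) + 1) + 1) * π / 2 + x = ((2 * (i:ℝ) + 1) * π / 2 + x) + π by ring,
      Real.cos_add_pi]
    push_cast at ih
    rw [ih, pow_succ]
    ring

lemma Gsum_eq_zero (hn : 0 < n) {m : ℕ} (hm0 : 0 < m) (hmn : m < n) : Gsum n m = 0 := by
  have hn' : (0:ℝ) < n := by exact_mod_cast hn
  have hm' : (0:ℝ) < m := by exact_mod_cast hm0
  have hmn' : (m:ℝ) < n := by exact_mod_cast hmn
  have hπ := Real.pi_pos
  set a : ℝ := m * π / n with ha
  have hsin : 0 < Real.sin a := by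
    apply Real.sin_pos_of_pos_of_lt_pi (by positivity)
    rw [ha, div_lt_iff₀ hn']
    nlinarith
  set r : ℂ := -Complex.exp ((a:ℝ) * Complex.I) with hr
  have hr1 : r ≠ 1 := by
    intro h
    have he : Complex.exp ((a:ℝ) * Complex.I) = -1 := by
      rw [← neg_neg (Complex.exp _), ← hr, h]
    have him := congrArg Complex.im he
    rw [Complex.exp_ofReal_mul_I_im] at him
    simp at him
    linarith
  have hterm : ∀ j ∈ Finset.range (2 * n),
      (-1 : ℝ) ^ j * Real.sin (2 * m * th n j)
        = (Complex.exp (((a / 2 : ℝ)) * Complex.I) * r ^ j).im := by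
    intro j hj
    have hang : a / 2 + (j:ℝ) * a = 2 * m * th n j := by
      rw [ha]; unfold th; field_simp; ring
    have hprod : Complex.exp (((a / 2 : ℝ)) * Complex.I) * r ^ j
        = (((-1 : ℝ) ^ j : ℝ) : ℂ) * Complex.exp (((2 * (m:ℝ) * th n j : ℝ)) * Complex.I) := by
      rw [hr, neg_pow, ← Complex.exp_nat_mul]
      have harg : (((2 * (m:ℝ) * th n j : ℝ)) : ℂ) * Complex.I
          = ((a / 2 : ℝ) : ℂ) * Complex.I + (j : ℕ) * (((a:ℝ):ℂ) * Complex.I) := by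
        rw [show ((2 * (m:ℝ) * th n j : ℝ) : ℂ) = (((a / 2 + (j:ℝ) * a : ℝ)) : ℂ) by rw [hang]]
        push_cast
        ring
      rw [harg, Complex.exp_add]
      push_cast
      ring
    rw [hprod, Complex.mul_im]
    simp only [Complex.exp_ofReal_mul_I_im, Complex.exp_ofReal_mul_I_re, Complex.ofReal_re,
      Complex.ofReal_im]
    ring
  unfold Gsum
  rw [Finset.sum_congr rfl hterm, ← Complex.im_sum, ← Finset.mul_sum, geom_sum_eq hr1]
  have hrpow : r ^ (2 * n) = 1 := by
    rw [hr, neg_pow, ← Complex.exp_nat_mul]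
    have harg : ((2 * n : ℕ) : ℂ) * (((a:ℝ):ℂ) * Complex.I) = ((m:ℕ) : ℤ) * (2 * π * Complex.I) := by
      have hnc : (n:ℂ) ≠ 0 := Nat.cast_ne_zero.2 hn.ne'
      rw [ha]
      push_cast
      field_simp
    rw [harg, Complex.exp_int_mul_two_pi_mul_I]
    have : ((-1 : ℂ)) ^ (2 * n) = 1 := Even.neg_one_pow ⟨n, by ring⟩
    rw [this, one_mul]
  rw [hrpow]
  simp

lemma neg_one_pow_sq (j : ℕ) : ((-1 : ℝ)) ^ j * ((-1 : ℝ)) ^ j = 1 := by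
  rw [← pow_add]; exact Even.neg_one_pow ⟨j, rfl⟩

lemma sin_two_n (hn : 0 < n) (j : ℕ) : Real.sin (2 * (n:ℝ) * th n j) = (-1 : ℝ) ^ j := by
  have hn' : ((n:ℝ)) ≠ 0 := by positivity
  rw [show 2 * (n:ℝ) * th n j = (2 * (j:ℝ) + 1) * π / 2 by unfold th; field_simp; ring]
  exact sin_odd j

lemma Gsum_n (hn : 0 < n) : Gsum n n = 2 * n := by
  unfold Gsum
  have h : ∀ j ∈ Finset.range (2 * n), (-1 : ℝ) ^ j * Real.sin (2 * n * th n j) = 1 := by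
    intro j hj
    rw [sin_two_n hn j, neg_one_pow_sq]
  rw [Finset.sum_congr rfl h, Finset.sum_const, card_range]
  simp

lemma Asum_succ (hn : 0 < n) (m : ℕ) :
    Asum n (m + 1) = Asum n m - 2 * Gsum n (m + 1) := by
  unfold Asum Gsum
  rw [Finset.mul_sum, ← Finset.sum_sub_distrib]
  apply Finset.sum_congr rfl
  intro j hj
  have hs := (sin_th_pos hn (mem_range.1 hj)).ne'
  have key := Real.cos_sub_cos ((2 * (m:ℝ) + 3) * th n j) ((2 * (m:ℝ) + 1) * th n j)
  rw [show ((2 * (m:ℝ) + 3) * th n j + (2 * (m:ℝ) + 1) * th n j) / 2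
      = 2 * ((m:ℝ) + 1) * th n j by ring,
    show ((2 * (m:ℝ) + 3) * th n j - (2 * (m:ℝ) + 1) * th n j) / 2 = th n j by ring] at key
  push_cast
  rw [show (2 * ((m:ℝ) + 1) + 1) * th n j = (2 * (m:ℝ) + 3) * th n j by ring]
  field_simp
  linear_combination (norm := ring_nf) key

lemma Asum_n (hn : 0 < n) : Asum n n = -(2 * n) := by
  unfold Asum
  have h : ∀ j ∈ Finset.range (2 * n),
      (-1 : ℝ) ^ j * Real.cos ((2 * (n:ℝ) + 1) * th n j) / Real.sin (th n j) = -1 := by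
    intro j hj
    have hs := (sin_th_pos hn (mem_range.1 hj)).ne'
    have hn' : ((n:ℝ)) ≠ 0 := by
      have : (0:ℝ) < n := by exact_mod_cast hn
      positivity
    have harg : (2 * (n:ℝ) + 1) * th n j = (2 * (j:ℝ) + 1) * π / 2 + th n j := by
      unfold th; field_simp; ring
    rw [harg, cos_odd_add]
    field_simp
    linear_combination (-1 : ℝ) * neg_one_pow_sq j
  rw [Finset.sum_congr rfl h, Finset.sum_const, card_range]
  simp

lemma Asum_lt (hn : 0 < n) : ∀ m, m < n → Asum n m = Asum n 0 := by
  intro m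
  induction m with
  | zero => intro _; rfl
  | succ i ih =>
    intro hi
    rw [Asum_succ hn i, Gsum_eq_zero hn (Nat.succ_pos i) hi, ih (by omega)]
    ring

lemma Asum_zero (hn : 0 < n) : Asum n 0 = 2 * n := by
  obtain ⟨m, rfl⟩ : ∃ m, n = m + 1 := ⟨n - 1, by omega⟩
  have h1 : Asum (m+1) (m+1) = Asum (m+1) 0 - 2 * Gsum (m+1) (m+1) := by
    rw [Asum_succ hn m, Asum_lt hn m (by omega)]
  rw [Asum_n hn, Gsum_n hn] at h1
  push_cast at h1 ⊢
  linarith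

lemma Asum_eq (hn : 0 < n) {m : ℕ} (hm : m < n) : Asum n m = 2 * n := by
  rw [Asum_lt hn m hm, Asum_zero hn]

lemma Bsum_succ (hn : 0 < n) (k : ℕ) :
    Bsum n (k + 1) = Bsum n k + 2 * Asum n k := by
  unfold Bsum Asum
  rw [Finset.mul_sum, ← Finset.sum_add_distrib]
  apply Finset.sum_congr rfl
  intro j hj
  have hs := (sin_th_pos hn (mem_range.1 hj)).ne'
  have key := Real.sin_sub_sin ((2 * (k:ℝ) + 2) * th n j) (2 * (k:ℝ) * th n j)
  rw [show ((2 * (k:ℝ) + 2) * th n j - 2 * (k:ℝ) * th n j) / 2 = th n j by ring,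
    show ((2 * (k:ℝ) + 2) * th n j + 2 * (k:ℝ) * th n j) / 2
      = (2 * (k:ℝ) + 1) * th n j by ring] at key
  have hS : Real.sin ((2 * (k:ℝ) + 2) * th n j)
      = Real.sin (2 * (k:ℝ) * th n j)
        + 2 * Real.sin (th n j) * Real.cos ((2 * (k:ℝ) + 1) * th n j) := by linarith
  push_cast
  rw [show 2 * ((k:ℝ) + 1) * th n j = (2 * (k:ℝ) + 2) * th n j by ring, hS]
  field_simp

lemma Bsum_eq (hn : 0 < n) : ∀ k, k ≤ n → Bsum n k = 4 * n * k := by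
  intro k
  induction k with
  | zero =>
    intro _
    unfold Bsum
    simp
  | succ i ih =>
    intro hi
    rw [Bsum_succ hn i, ih (by omega), Asum_eq hn (by omega)]
    push_cast
    ring

lemma sum_inv_sin_sq (hn : 0 < n) :
    ∑ j ∈ Finset.range (2 * n), 1 / Real.sin (th n j) ^ 2 = 4 * (n:ℝ) * (n:ℝ) := by
  have hB := Bsum_eq hn n le_rfl
  unfold Bsum at hB
  rw [← hB]
  apply Finset.sum_congr rfl
  intro j hj
  have hs := (sin_th_pos hn (mem_range.1 hj)).ne'
  rw [sin_two_n hn j, neg_one_pow_sq]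

lemma lam_abs_sum (hn : 0 < n) : ∑ j ∈ Finset.range (2 * n), |lam n j| = n := by
  have hn' : (0:ℝ) < n := by exact_mod_cast hn
  have h : ∀ j ∈ Finset.range (2 * n),
      |lam n j| = (1 / Real.sin (th n j) ^ 2) / (4 * n) := by
    intro j hj
    have hs := sin_th_pos hn (mem_range.1 hj)
    unfold lam
    have h1 : |((-1:ℝ)) ^ j| = 1 := by
      rw [_root_.abs_pow, _root_.abs_neg, abs_one, one_pow]
    rw [abs_div, h1, _root_.abs_of_pos (by positivity : (0:ℝ) < 4 * n * Real.sin (th n j) ^ 2)]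
    field_simp
  rw [Finset.sum_congr rfl h, ← Finset.sum_div, sum_inv_sin_sq hn]
  field_simp

lemma sum_lam_cos (hn : 0 < n) (k : ℤ) :
    ∑ j ∈ Finset.range (2 * n), lam n j * Real.cos ((k:ℝ) * (2 * th n j)) = 0 := by
  have hrefl := Finset.sum_range_reflect
    (fun j => lam n j * Real.cos ((k:ℝ) * (2 * th n j))) (2 * n)
  have hneg : ∀ j ∈ Finset.range (2 * n),
      lam n (2 * n - 1 - j) * Real.cos ((k:ℝ) * (2 * th n (2 * n - 1 - j)))
        = -(lam n j * Real.cos ((k:ℝ) * (2 * th n j))) := by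
    intro j hj
    have hj' := mem_range.1 hj
    have hth := th_reflect hn hj'
    have hlam : lam n (2 * n - 1 - j) = -lam n j := by
      unfold lam
      rw [sign_reflect hj', hth, Real.sin_pi_sub]
      ring
    have hcos : Real.cos ((k:ℝ) * (2 * th n (2 * n - 1 - j)))
        = Real.cos ((k:ℝ) * (2 * th n j)) := by
      rw [hth, show (k:ℝ) * (2 * (π - th n j)) = (k:ℝ) * (2 * π) - (k:ℝ) * (2 * th n j) by ring,
        Real.cos_int_mul_two_pi_sub]
    rw [hlam, hcos]
    ring
  rw [Finset.sum_congr rfl hneg, Finset.sum_neg_distrib] at hrefl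
  linarith

lemma sum_lam_sin_nat (hn : 0 < n) {k : ℕ} (hk : k ≤ n) :
    ∑ j ∈ Finset.range (2 * n), lam n j * Real.sin ((k:ℝ) * (2 * th n j)) = k := by
  have hn' : (0:ℝ) < n := by exact_mod_cast hn
  have hB := Bsum_eq hn k hk
  unfold Bsum at hB
  have h : ∀ j ∈ Finset.range (2 * n),
      lam n j * Real.sin ((k:ℝ) * (2 * th n j))
        = ((-1 : ℝ) ^ j * Real.sin (2 * k * th n j) / Real.sin (th n j) ^ 2) / (4 * n) := by
    intro j hj
    unfold lam
    rw [show (k:ℝ) * (2 * th n j) = 2 * (k:ℝ) * th n j by ring]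
    ring
  rw [Finset.sum_congr rfl h, ← Finset.sum_div, hB]
  field_simp

lemma sum_lam_sin (hn : 0 < n) {k : ℤ} (hk : |k| ≤ (n:ℤ)) :
    ∑ j ∈ Finset.range (2 * n), lam n j * Real.sin ((k:ℝ) * (2 * th n j)) = k := by
  rcases le_or_gt 0 k with hk0 | hk0
  · lift k to ℕ using hk0 with k'
    have hk' : k' ≤ n := by
      rw [abs_of_nonneg (Int.ofNat_nonneg k')] at hk
      exact_mod_cast hk
    have := sum_lam_sin_nat hn hk'
    push_cast at this ⊢
    exact this
  · have hk2 : -k ≤ (n:ℤ) := by have := (abs_le.1 hk).1; linarith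
    have hk' : (-k).toNat ≤ n := by omega
    have hcast : ((((-k).toNat : ℕ)) : ℝ) = -(k:ℝ) := by
      have : (((-k).toNat : ℤ)) = -k := Int.toNat_of_nonneg (by omega)
      exact_mod_cast this
    have h := sum_lam_sin_nat hn hk'
    rw [hcast] at h
    have h2 : ∀ j ∈ Finset.range (2 * n),
        lam n j * Real.sin (-(k:ℝ) * (2 * th n j))
          = -(lam n j * Real.sin ((k:ℝ) * (2 * th n j))) := by
      intro j hj
      rw [show -(k:ℝ) * (2 * th n j) = -((k:ℝ) * (2 * th n j)) by ring, Real.sin_neg]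
      ring
    rw [Finset.sum_congr rfl h2, Finset.sum_neg_distrib] at h
    linarith

/-- The key identity: Σ_j λ_j e^{ik t_j} = ik for |k| ≤ n, t_j = 2θ_j. -/
lemma key_identity (hn : 0 < n) {k : ℤ} (hk : k ∈ Finset.Icc (-(n:ℤ)) (n:ℤ)) :
    ∑ j ∈ Finset.range (2 * n),
        ((lam n j : ℝ) : ℂ) * Complex.exp (Complex.I * (k:ℂ) * ((2 * th n j : ℝ) : ℂ))
      = Complex.I * (k:ℂ) := by
  have hk' : |k| ≤ (n:ℤ) := by
    rw [abs_le]; exact ⟨(Finset.mem_Icc.1 hk).1, (Finset.mem_Icc.1 hk).2⟩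
  have hterm : ∀ j ∈ Finset.range (2 * n),
      ((lam n j : ℝ) : ℂ) * Complex.exp (Complex.I * (k:ℂ) * ((2 * th n j : ℝ) : ℂ))
        = ((lam n j * Real.cos ((k:ℝ) * (2 * th n j)) : ℝ) : ℂ)
          + ((lam n j * Real.sin ((k:ℝ) * (2 * th n j)) : ℝ) : ℂ) * Complex.I := by
    intro j _
    rw [show Complex.I * (k:ℂ) * ((2 * th n j : ℝ) : ℂ)
        = (((k:ℝ) * (2 * th n j) : ℝ) : ℂ) * Complex.I by push_cast; ring]
    rw [Complex.exp_mul_I, ← Complex.ofReal_cos, ← Complex.ofReal_sin]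
    push_cast
    ring
  rw [Finset.sum_congr rfl hterm, Finset.sum_add_distrib, ← Finset.sum_mul,
    ← Complex.ofReal_sum, ← Complex.ofReal_sum, sum_lam_cos hn k, sum_lam_sin hn hk']
  push_cast
  ring

/-- Riesz interpolation formula. -/
lemma riesz_formula (hn : 0 < n) (c : ℤ → ℂ) (x : ℝ) :
    ∑ k ∈ Finset.Icc (-(n:ℤ)) (n:ℤ), Complex.I * k * c k * Complex.exp (Complex.I * k * x)
      = ∑ j ∈ Finset.range (2 * n), ((lam n j : ℝ) : ℂ)
          * ∑ k ∈ Finset.Icc (-(n:ℤ)) (n:ℤ),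
              c k * Complex.exp (Complex.I * k * ((x + 2 * th n j : ℝ) : ℂ)) := by
  have h1 : ∀ j ∈ Finset.range (2 * n),
      ((lam n j : ℝ) : ℂ) * ∑ k ∈ Finset.Icc (-(n:ℤ)) (n:ℤ),
          c k * Complex.exp (Complex.I * k * ((x + 2 * th n j : ℝ) : ℂ))
        = ∑ k ∈ Finset.Icc (-(n:ℤ)) (n:ℤ), (c k * Complex.exp (Complex.I * k * (x:ℂ)))
            * (((lam n j : ℝ) : ℂ) * Complex.exp (Complex.I * k * ((2 * th n j : ℝ) : ℂ))) := by
    intro j _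
    rw [Finset.mul_sum]
    apply Finset.sum_congr rfl
    intro k _
    rw [show ((x + 2 * th n j : ℝ) : ℂ) = (x:ℂ) + ((2 * th n j : ℝ) : ℂ) by push_cast; ring,
      mul_add (Complex.I * (k:ℂ)), Complex.exp_add]
    ring
  rw [Finset.sum_congr rfl h1, Finset.sum_comm]
  apply Finset.sum_congr rfl
  intro k hk
  rw [← Finset.mul_sum, key_identity hn hk]
  ring

lemma hasDerivAt_T (c : ℤ → ℂ) (x : ℝ) :
    HasDerivAt (fun y : ℝ => ∑ k ∈ Finset.Icc (-(n:ℤ)) (n:ℤ),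
        c k * Complex.exp (Complex.I * k * y))
      (∑ k ∈ Finset.Icc (-(n:ℤ)) (n:ℤ),
        Complex.I * k * c k * Complex.exp (Complex.I * k * x)) x := by
  apply HasDerivAt.fun_sum
  intro k _
  have h0 : HasDerivAt (fun y : ℝ => (y : ℂ)) 1 x := by
    simpa using (hasDerivAt_id x).ofReal_comp
  have h1 : HasDerivAt (fun y : ℝ => Complex.I * (k:ℂ) * (y : ℂ)) (Complex.I * (k:ℂ)) x := by
    simpa using h0.const_mul (Complex.I * (k:ℂ))
  have h2 := (h1.cexp).const_mul (c k)
  convert h2 using 1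
  · rfl
  · ring

lemma deriv_T (c : ℤ → ℂ) :
    deriv (fun y : ℝ => ∑ k ∈ Finset.Icc (-(n:ℤ)) (n:ℤ),
        c k * Complex.exp (Complex.I * k * y))
      = fun x : ℝ => ∑ k ∈ Finset.Icc (-(n:ℤ)) (n:ℤ),
          Complex.I * k * c k * Complex.exp (Complex.I * k * x) := by
  funext x
  exact (hasDerivAt_T c x).deriv

lemma cont_T (c : ℤ → ℂ) :
    Continuous (fun x : ℝ => ∑ k ∈ Finset.Icc (-(n:ℤ)) (n:ℤ),
      c k * Complex.exp (Complex.I * k * x)) := by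
  apply continuous_finset_sum
  intro k _
  exact continuous_const.mul (Complex.continuous_exp.comp
    (continuous_const.mul Complex.continuous_ofReal))

lemma periodic_T (c : ℤ → ℂ) (x : ℝ) :
    ∑ k ∈ Finset.Icc (-(n:ℤ)) (n:ℤ), c k * Complex.exp (Complex.I * k * ((x + 2 * π : ℝ) : ℂ))
      = ∑ k ∈ Finset.Icc (-(n:ℤ)) (n:ℤ), c k * Complex.exp (Complex.I * k * (x:ℂ)) := by
  apply Finset.sum_congr rfl
  intro k _
  rw [show Complex.I * (k:ℂ) * ((x + 2 * π : ℝ) : ℂ)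
      = Complex.I * (k:ℂ) * (x:ℂ) + (k:ℂ) * (2 * (π:ℂ) * Complex.I) by push_cast; ring,
    Complex.exp_add, Complex.exp_int_mul_two_pi_mul_I, mul_one]

/-- Translation invariance of the Lᵖ norm over a period. -/
lemma eLpNorm_translate {g : ℝ → ℂ} (hg : Continuous g) (hper : ∀ x, g (x + 2 * π) = g x)
    {t : ℝ} (ht0 : 0 ≤ t) (ht2 : t ≤ 2 * π) (p : ENNReal) :
    eLpNorm (fun x => g (x + t)) p (volume.restrict (Set.Ioc 0 (2 * π)))
      = eLpNorm g p (volume.restrict (Set.Ioc 0 (2 * π))) := by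
  classical
  set φ : ℝ → ℝ := fun x => if x + t ≤ 2 * π then x + t else x + t - 2 * π with hφ
  have hφm : Measurable φ := by
    apply Measurable.ite
    · exact measurableSet_le (by fun_prop) measurable_const
    · fun_prop
    · fun_prop
  have hgφ : (fun x => g (x + t)) = g ∘ φ := by
    funext x
    by_cases h : x + t ≤ 2 * π
    · simp [hφ, h]
    · simp only [hφ, Function.comp_apply, if_neg h]
      rw [← hper (x + t - 2 * π)]
      ring_nf
  have h1 : Measure.map φ (volume.restrict (Set.Ioc 0 (2 * π - t)))
      = volume.restrict (Set.Ioc t (2 * π)) := by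
    have hae : φ =ᵐ[volume.restrict (Set.Ioc 0 (2 * π - t))] (fun x => x + t) := by
      filter_upwards [ae_restrict_mem measurableSet_Ioc] with x hx
      have : x + t ≤ 2 * π := by have := hx.2; linarith
      simp [hφ, this]
    rw [Measure.map_congr hae]
    have hmp := (measurePreserving_add_right volume t).restrict_preimage
      (s := Set.Ioc t (2 * π)) measurableSet_Ioc
    have hpre : (fun x => x + t) ⁻¹' Set.Ioc t (2 * π) = Set.Ioc 0 (2 * π - t) := by
      rw [Set.preimage_add_const_Ioc]
      congr 1
      ring
    rw [hpre] at hmp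
    exact hmp.map_eq
  have h2 : Measure.map φ (volume.restrict (Set.Ioc (2 * π - t) (2 * π)))
      = volume.restrict (Set.Ioc 0 t) := by
    have hae : φ =ᵐ[volume.restrict (Set.Ioc (2 * π - t) (2 * π))]
        (fun x => x + (t - 2 * π)) := by
      filter_upwards [ae_restrict_mem measurableSet_Ioc] with x hx
      have hgt : ¬ (x + t ≤ 2 * π) := by have := hx.1; push_neg; linarith
      simp only [hφ, if_neg hgt]
      ring
    rw [Measure.map_congr hae]
    have hmp := (measurePreserving_add_right volume (t - 2 * π)).restrict_preimage
      (s := Set.Ioc 0 t) measurableSet_Ioc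
    have hpre : (fun x => x + (t - 2 * π)) ⁻¹' Set.Ioc 0 t = Set.Ioc (2 * π - t) (2 * π) := by
      rw [Set.preimage_add_const_Ioc]
      congr 1 <;> ring
    rw [hpre] at hmp
    exact hmp.map_eq
  have hmp : MeasurePreserving φ (volume.restrict (Set.Ioc 0 (2 * π)))
      (volume.restrict (Set.Ioc 0 (2 * π))) := by
    refine ⟨hφm, ?_⟩
    have hsplit : volume.restrict (Set.Ioc (0:ℝ) (2 * π))
        = volume.restrict (Set.Ioc 0 (2 * π - t)) + volume.restrict (Set.Ioc (2 * π - t) (2 * π)) := by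
      rw [← Measure.restrict_union (Set.Ioc_disjoint_Ioc_of_le le_rfl) measurableSet_Ioc,
        Set.Ioc_union_Ioc_eq_Ioc (by linarith) (by linarith)]
    rw [hsplit, Measure.map_add _ _ hφm, h1, h2, add_comm,
      ← Measure.restrict_union (Set.Ioc_disjoint_Ioc_of_le le_rfl) measurableSet_Ioc,
      Set.Ioc_union_Ioc_eq_Ioc ht0 ht2]
    exact hsplit
  rw [hgφ, eLpNorm_comp_measurePreserving hg.aestronglyMeasurable hmp]

/-- One-step Bernstein inequality via the Riesz interpolation formula. -/
lemma step (hn : 0 < n) (c : ℤ → ℂ) {p : ENNReal} (hp : 1 ≤ p) :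
    eLpNorm (fun x : ℝ => ∑ k ∈ Finset.Icc (-(n:ℤ)) (n:ℤ),
        Complex.I * k * c k * Complex.exp (Complex.I * k * x)) p
        (volume.restrict (Set.Ioc 0 (2 * π)))
      ≤ (n : ENNReal) * eLpNorm (fun x : ℝ => ∑ k ∈ Finset.Icc (-(n:ℤ)) (n:ℤ),
          c k * Complex.exp (Complex.I * k * x)) p
          (volume.restrict (Set.Ioc 0 (2 * π))) := by
  classical
  set μ := volume.restrict (Set.Ioc (0:ℝ) (2 * π)) with hμ
  set T : ℝ → ℂ := fun x => ∑ k ∈ Finset.Icc (-(n:ℤ)) (n:ℤ),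
    c k * Complex.exp (Complex.I * k * x) with hT
  have hTc : Continuous T := cont_T c
  have heq : (fun x : ℝ => ∑ k ∈ Finset.Icc (-(n:ℤ)) (n:ℤ),
      Complex.I * k * c k * Complex.exp (Complex.I * k * x))
        = ∑ j ∈ Finset.range (2 * n),
            (((lam n j : ℝ) : ℂ) • fun x : ℝ => T (x + 2 * th n j)) := by
    funext x
    rw [Finset.sum_apply, riesz_formula hn c x]
    apply Finset.sum_congr rfl
    intro j _
    simp only [Pi.smul_apply, smul_eq_mul, hT]
  rw [heq]
  have hmeas : ∀ j ∈ Finset.range (2 * n),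
      AEStronglyMeasurable (((lam n j : ℝ) : ℂ) • fun x : ℝ => T (x + 2 * th n j)) μ := by
    intro j _
    exact ((hTc.comp (continuous_id.add continuous_const)).aestronglyMeasurable).const_smul _
  refine le_trans (eLpNorm_sum_le hmeas hp) ?_
  have hterm : ∀ j ∈ Finset.range (2 * n),
      eLpNorm (((lam n j : ℝ) : ℂ) • fun x : ℝ => T (x + 2 * th n j)) p μ
        = (‖lam n j‖₊ : ENNReal) * eLpNorm T p μ := by
    intro j hj
    rw [eLpNorm_const_smul]
    have hθlt := th_lt_pi hn (Finset.mem_range.1 hj)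
    have hθpos := th_pos hn j
    have htr : eLpNorm (fun x : ℝ => T (x + 2 * th n j)) p μ = eLpNorm T p μ := by
      exact eLpNorm_translate hTc (fun x => periodic_T c x) (by linarith) (by linarith) p
    rw [htr]
    congr 1
    simp [enorm_eq_nnnorm]
  rw [Finset.sum_congr rfl hterm, ← Finset.sum_mul]
  have hsum : ∑ j ∈ Finset.range (2 * n), (‖lam n j‖₊ : ENNReal) = (n : ENNReal) := by
    have h1 : ∑ j ∈ Finset.range (2 * n), ‖lam n j‖₊ = (n : NNReal) := by
      apply NNReal.coe_injective
      push_cast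
      simpa [Real.norm_eq_abs] using lam_abs_sum hn
    rw [← ENNReal.coe_finset_sum, h1]
    simp
  rw [hsum]

end BernsteinProof

/-- Bernstein's inequality ‖T_n^{(α)}‖_p ≤ n^α ‖T_n‖_p, 1 ≤ p ≤ ∞, for trigonometric
polynomials T_n(x) = Σ_{0<|k|≤n} c_k e^{ikx} with zero constant term, α ∈ ℕ. -/
theorem bernstein_inequality (n : ℕ) (hn : 0 < n) (α : ℕ) (c : ℤ → ℂ) (hc0 : c 0 = 0)
    (p : ENNReal) (hp : 1 ≤ p) :
    eLpNorm
        (iteratedDeriv α (fun x : ℝ =>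
          ∑ k ∈ Finset.Icc (-(n:ℤ)) (n:ℤ), c k * Complex.exp (Complex.I * k * x)))
        p (volume.restrict (Set.Ioc (0:ℝ) (2 * π)))
      ≤ (n : ENNReal) ^ α *
        eLpNorm (fun x : ℝ =>
          ∑ k ∈ Finset.Icc (-(n:ℤ)) (n:ℤ), c k * Complex.exp (Complex.I * k * x))
        p (volume.restrict (Set.Ioc (0:ℝ) (2 * π))) := by
  induction α generalizing c with
  | zero => simp [iteratedDeriv_zero]
  | succ β ih =>
    rw [iteratedDeriv_succ', BernsteinProof.deriv_T c]
    refine le_trans (ih (fun k => Complex.I * k * c k) (by simp)) ?_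
    refine le_trans (mul_le_mul_right (BernsteinProof.step hn c hp) _) ?_
    rw [pow_succ]
    ring_nf
    exact le_rfl
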